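/- For every h ∈ (0, 1] the function e₊ belongs to L²(ℝ), and for every δ > 0 there exist c' > 0 and h₀ > 0 such that for all h ∈ (0, h₀): ∫_{|x − x₊| ≥ δ} |e₊(x)|² dx ≤ e^{−c'/h} · ∫_ℝ |e₊(x)|² dx. (This expresses that the quasimode e₊ concentrates exponentially at x₊; in particular, for any cutoff χ₊ equal to 1 near x₊, the Grushin-problem quantity D₊ = ⟨e₊, χ₊e₊⟩/‖e₊‖² equals 1 + O(e^{−1/(Ch)}).) -/

import Mathlib

open Complex MeasureTheory

section StmtAux
open Set

lemma aux_norm_sq_exp (h : ℝ) (hh : 0 < h) (w : ℂ) :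
    ‖Complex.exp (-(Complex.I / (h:ℂ)) * w)‖ ^ 2 = Real.exp (2 / h * w.im) := by
  rw [Complex.norm_exp, ← Real.exp_nat_mul]
  congr 1
  have hre : (-(Complex.I / (h:ℂ)) * w).re = w.im / h := by
    simp only [Complex.mul_re, Complex.div_ofReal_re, Complex.div_ofReal_im, Complex.neg_re,
      Complex.neg_im, Complex.I_re, Complex.I_im]
    field_simp
    ring
  rw [hre]
  push_cast
  rw [div_eq_mul_inv]
  ring

lemma aux_exp_tail_integrableOn_Ioi (b s a : ℝ) (hb : 0 < b) :
    IntegrableOn (fun x : ℝ => Real.exp (-(b * (x - s)))) (Ioi a) := by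
  have he : (fun x : ℝ => Real.exp (-(b * (x - s))))
      = fun x => Real.exp (b * s) * Real.exp (-b * x) := by
    funext x; rw [← Real.exp_add]; ring_nf
  rw [he]
  exact (exp_neg_integrableOn_Ioi a hb).const_mul _

lemma aux_exp_tail_integral_Ioi (b s a : ℝ) (hb : 0 < b) :
    ∫ x in Ioi a, Real.exp (-(b * (x - s))) = Real.exp (-(b * (a - s))) / b := by
  have he : (fun x : ℝ => Real.exp (-(b * (x - s))))
      = fun x => Real.exp (b * s) * Real.exp (-(b * x)) := by
    funext x; rw [← Real.exp_add]; ring_nf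
  rw [he, MeasureTheory.integral_const_mul]
  have h2 := integral_comp_mul_left_Ioi (fun y => Real.exp (-y)) a hb
  simp only [smul_eq_mul] at h2
  rw [h2, integral_exp_neg_Ioi]
  rw [show -(b * (a - s)) = b * s + -(b * a) by ring, Real.exp_add, div_eq_mul_inv]
  ring

lemma aux_exp_tail_integrableOn_Iic (b s a : ℝ) (hb : 0 < b) :
    IntegrableOn (fun x : ℝ => Real.exp (-(b * (s - x)))) (Iic a) := by
  have m : MeasurableEmbedding fun x : ℝ => -x := (Homeomorph.neg ℝ).measurableEmbedding
  have h1 : IntegrableOn (fun x : ℝ => Real.exp (-(b * (x - (-s))))) (Ici (-a)) := by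
    rw [integrableOn_Ici_iff_integrableOn_Ioi]
    exact aux_exp_tail_integrableOn_Ioi b (-s) (-a) hb
  have key : IntegrableOn (fun x : ℝ => Real.exp (-(b * (s - x)))) (Iic a)
      (Measure.map (fun x : ℝ => -x) volume) := by
    rw [m.integrableOn_map_iff]
    have hpre : ((fun x : ℝ => -x) ⁻¹' Iic a : Set ℝ) = Ici (-a) := by
      ext x; simp [neg_le]
    have hfun : ((fun x : ℝ => Real.exp (-(b * (s - x)))) ∘ fun x : ℝ => -x)
        = fun x : ℝ => Real.exp (-(b * (x - (-s)))) := by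
      funext x; simp only [Function.comp]; ring_nf
    rw [hpre, hfun]
    exact h1
  rwa [Measure.map_neg_eq_self (volume : Measure ℝ)] at key

lemma aux_exp_tail_integral_Iic (b s a : ℝ) (hb : 0 < b) :
    ∫ x in Iic a, Real.exp (-(b * (s - x))) = Real.exp (-(b * (s - a))) / b := by
  have h2 := integral_comp_neg_Iic a (fun y => Real.exp (-(b * (s + y))))
  simp only [← sub_eq_add_neg] at h2
  rw [h2]
  have he : (fun x : ℝ => Real.exp (-(b * (s + x))))
      = fun x : ℝ => Real.exp (-(b * (x - (-s)))) := by
    funext x; ring_nf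
  rw [he, aux_exp_tail_integral_Ioi b (-s) (-a) hb]
  ring_nf

end StmtAux

/-- Exponential concentration of the quasimode `e₊(x) = exp(−(i/h)∫_{x₊}^x g)` at `x₊`:
`e₊ ∈ L²(ℝ)`, and for every `δ > 0` the `L²` mass of `e₊` outside `|x − x₊| < δ` is
an exponentially small (`≤ e^{−c'/h}`) fraction of its total `L²` mass. -/
theorem stmt_17
    (xp : ℝ) (c C : ℝ) (hc : 0 < c) (hC : 0 < C)
    (g : ℝ → ℂ) (hg : Continuous g)
    (h1 : ∀ x : ℝ, x < xp → 0 < (g x).im)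
    (h2 : ∀ x : ℝ, xp < x → (g x).im < 0)
    (h3 : ∀ x : ℝ, c * min |x - xp| 1 ≤ |(g x).im|)
    (h4 : ∀ x : ℝ, |x - xp| ≤ 1 → |(g x).im| ≤ C * |x - xp|) :
    (∀ h ∈ Set.Ioc (0:ℝ) 1,
      MemLp (fun x : ℝ => Complex.exp (-(Complex.I / (h:ℂ)) * ∫ t in xp..x, g t))
        2 volume) ∧
    ∀ δ : ℝ, 0 < δ → ∃ c' h₀ : ℝ, 0 < c' ∧ 0 < h₀ ∧ h₀ ≤ 1 ∧ ∀ h ∈ Set.Ioo (0:ℝ) h₀,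
      (∫ x in {x : ℝ | δ ≤ |x - xp|},
          ‖Complex.exp (-(Complex.I / (h:ℂ)) * ∫ t in xp..x, g t)‖ ^ 2)
        ≤ Real.exp (-c' / h) *
          ∫ x : ℝ, ‖Complex.exp (-(Complex.I / (h:ℂ)) * ∫ t in xp..x, g t)‖ ^ 2 := by
  open Set in
  have hgim : Continuous fun t => (g t).im := Complex.continuous_im.comp hg
  have hInt : ∀ a b : ℝ, IntervalIntegrable (fun t => (g t).im) volume a b :=
    fun a b => hgim.intervalIntegrable a b
  set Φ : ℝ → ℝ := fun x => ∫ t in xp..x, (g t).im with hΦdef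
  have hΦcont : Continuous Φ := intervalIntegral.continuous_primitive hInt xp
  have him0 : (g xp).im = 0 := by
    have h5 := h4 xp (by simp)
    simp only [sub_self, abs_zero, mul_zero] at h5
    exact abs_eq_zero.mp (le_antisymm h5 (abs_nonneg _))
  have hle0 : ∀ t, xp ≤ t → (g t).im ≤ 0 := by
    intro t ht
    rcases eq_or_lt_of_le ht with rfl | h
    · exact le_of_eq him0
    · exact (h2 t h).le
  have hge0 : ∀ t, t ≤ xp → 0 ≤ (g t).im := by
    intro t ht
    rcases eq_or_lt_of_le ht with rfl | h
    · exact ge_of_eq him0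
    · exact (h1 t h).le
  -- key upper bound on the right
  have keyR : ∀ d : ℝ, 0 < d → d ≤ 1 → ∀ x : ℝ, xp + d ≤ x →
      Φ x ≤ -(c * d / 2) * (x - (xp + d / 2)) := by
    intro d hd hd1 x hx
    have hsplit : Φ x = (∫ t in xp..(xp + d/2), (g t).im)
        + ∫ t in (xp + d/2)..x, (g t).im := by
      rw [hΦdef]
      exact (intervalIntegral.integral_add_adjacent_intervals (hInt _ _) (hInt _ _)).symm
    have hA : (∫ t in xp..(xp + d/2), (g t).im) ≤ 0 := by
      have hpt : ∀ t ∈ Set.Icc xp (xp + d/2), (g t).im ≤ (fun _ => (0:ℝ)) t :=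
        fun t ht => hle0 t ht.1
      have := intervalIntegral.integral_mono_on (show xp ≤ xp + d/2 by linarith)
        (hInt xp (xp + d/2)) intervalIntegrable_const hpt
      simpa using this
    have hB : (∫ t in (xp + d/2)..x, (g t).im) ≤ (x - (xp + d/2)) * (-(c * d / 2)) := by
      have hpt : ∀ t ∈ Set.Icc (xp + d/2) x, (g t).im ≤ (fun _ => (-(c * d / 2))) t := by
        intro t ht
        have ht1 : xp + d/2 ≤ t := ht.1
        have hneg : (g t).im < 0 := h2 t (by linarith)
        have h5 := h3 t
        rw [abs_of_neg hneg, _root_.abs_of_nonneg (by linarith : (0:ℝ) ≤ t - xp)] at h5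
        have hmin : d / 2 ≤ min (t - xp) 1 := le_min (by linarith) (by linarith)
        simp only
        nlinarith [mul_le_mul_of_nonneg_left hmin hc.le]
      have h7 := intervalIntegral.integral_mono_on (show xp + d/2 ≤ x by linarith)
        (hInt (xp + d/2) x) intervalIntegrable_const hpt
      rwa [intervalIntegral.integral_const, smul_eq_mul] at h7
    rw [hsplit]; nlinarith
  -- key upper bound on the left
  have keyL : ∀ d : ℝ, 0 < d → d ≤ 1 → ∀ x : ℝ, x ≤ xp - d →
      Φ x ≤ -(c * d / 2) * ((xp - d / 2) - x) := by
    intro d hd hd1 x hx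
    have hsym : Φ x = -∫ t in x..xp, (g t).im := by
      rw [hΦdef]; exact intervalIntegral.integral_symm x xp
    have hsplit : (∫ t in x..xp, (g t).im) = (∫ t in x..(xp - d/2), (g t).im)
        + ∫ t in (xp - d/2)..xp, (g t).im :=
      (intervalIntegral.integral_add_adjacent_intervals (hInt _ _) (hInt _ _)).symm
    have hA : 0 ≤ ∫ t in (xp - d/2)..xp, (g t).im :=
      intervalIntegral.integral_nonneg (by linarith) (fun t ht => hge0 t ht.2)
    have hB : ((xp - d/2) - x) * (c * d / 2) ≤ ∫ t in x..(xp - d/2), (g t).im := by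
      have hpt : ∀ t ∈ Set.Icc x (xp - d/2), (fun _ => (c * d / 2)) t ≤ (g t).im := by
        intro t ht
        have ht2 : t ≤ xp - d/2 := ht.2
        have hpos : 0 < (g t).im := h1 t (by linarith)
        have h5 := h3 t
        rw [abs_of_pos hpos, abs_of_nonpos (by linarith : t - xp ≤ 0)] at h5
        have hmin : d / 2 ≤ min (-(t - xp)) 1 := le_min (by linarith) (by linarith)
        simp only
        nlinarith [mul_le_mul_of_nonneg_left hmin hc.le]
      have h7 := intervalIntegral.integral_mono_on (show x ≤ xp - d/2 by linarith)
        intervalIntegrable_const (hInt x (xp - d/2)) hpt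
      rwa [intervalIntegral.integral_const, smul_eq_mul] at h7
    rw [hsym, hsplit]; nlinarith
  -- nonpositivity of Φ
  have hΦ0 : ∀ x : ℝ, Φ x ≤ 0 := by
    intro x
    rcases le_total xp x with hx | hx
    · have hpt : ∀ t ∈ Set.Icc xp x, (g t).im ≤ (fun _ => (0:ℝ)) t := fun t ht => hle0 t ht.1
      have := intervalIntegral.integral_mono_on hx (hInt xp x) intervalIntegrable_const hpt
      simpa [hΦdef] using this
    · have h5 : 0 ≤ ∫ t in x..xp, (g t).im :=
        intervalIntegral.integral_nonneg hx (fun t ht => hge0 t ht.2)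
      have hsym : Φ x = -∫ t in x..xp, (g t).im := intervalIntegral.integral_symm x xp
      rw [hsym]; linarith
  -- lower bound near xp
  have keyD : ∀ r : ℝ, 0 < r → r ≤ 1 → ∀ x : ℝ, |x - xp| ≤ r → -(C * r * r) ≤ Φ x := by
    intro r hr hr1 x hx
    rcases le_total xp x with hx' | hx'
    · rw [_root_.abs_of_nonneg (by linarith)] at hx
      have hpt : ∀ t ∈ Set.Icc xp x, (fun _ => (-(C * r))) t ≤ (g t).im := by
        intro t ht
        have h5 := h4 t (by
          rw [_root_.abs_of_nonneg (by linarith [ht.1] : (0:ℝ) ≤ t - xp)]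
          linarith [ht.2])
        rw [_root_.abs_of_nonneg (by linarith [ht.1] : (0:ℝ) ≤ t - xp)] at h5
        have hnab := neg_abs_le (g t).im
        have h6 : |(g t).im| ≤ C * r := by
          nlinarith [mul_le_mul_of_nonneg_left (show t - xp ≤ r by linarith [ht.2]) hC.le]
        simp only; linarith
      have hmono := intervalIntegral.integral_mono_on hx' intervalIntegrable_const
        (hInt xp x) hpt
      simp only [intervalIntegral.integral_const, smul_eq_mul] at hmono
      have hq : -(C * r * r) ≤ (x - xp) * (-(C * r)) := by
        nlinarith [mul_nonneg (mul_nonneg hC.le hr.le) (show (0:ℝ) ≤ r - (x - xp) by linarith)]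
      exact hq.trans hmono
    · rw [abs_of_nonpos (by linarith)] at hx
      have hsym : Φ x = -∫ t in x..xp, (g t).im := intervalIntegral.integral_symm x xp
      have hpt : ∀ t ∈ Set.Icc x xp, (g t).im ≤ (fun _ => (C * r)) t := by
        intro t ht
        have h5 := h4 t (by
          rw [abs_of_nonpos (by linarith [ht.2] : t - xp ≤ 0)]
          linarith [ht.1])
        rw [abs_of_nonpos (by linarith [ht.2] : t - xp ≤ 0)] at h5
        have hab := le_abs_self (g t).im
        have h6 : |(g t).im| ≤ C * r := by
          nlinarith [mul_le_mul_of_nonneg_left (show -(t - xp) ≤ r by linarith [ht.1]) hC.le]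
        simp only; linarith
      have hmono := intervalIntegral.integral_mono_on hx' (hInt x xp)
        intervalIntegrable_const hpt
      simp only [intervalIntegral.integral_const, smul_eq_mul] at hmono
      rw [hsym]
      have hq : (xp - x) * (C * r) ≤ C * r * r := by
        nlinarith [mul_nonneg (mul_nonneg hC.le hr.le) (show (0:ℝ) ≤ r - (xp - x) by linarith)]
      linarith
  -- norm formula
  have hnorm : ∀ h : ℝ, 0 < h → ∀ x : ℝ,
      ‖Complex.exp (-(Complex.I / (h:ℂ)) * ∫ t in xp..x, g t)‖ ^ 2
        = Real.exp (2 / h * Φ x) := by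
    intro h hh x
    have hw : (∫ t in xp..x, g t).im = Φ x := by
      have := Complex.imCLM.intervalIntegral_comp_comm (μ := volume) (hg.intervalIntegrable xp x)
      simpa [hΦdef] using this.symm
    rw [aux_norm_sq_exp h hh, hw]
  -- integrability
  have hFint : ∀ h : ℝ, 0 < h → Integrable (fun x => Real.exp (2 / h * Φ x)) := by
    intro h hh
    have hFm : AEStronglyMeasurable (fun x => Real.exp (2 / h * Φ x)) volume :=
      (Real.continuous_exp.comp (continuous_const.mul hΦcont)).aestronglyMeasurable
    rw [← integrableOn_univ, ← Set.Iic_union_Ioi (a := xp)]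
    have hR : IntegrableOn (fun x => Real.exp (2 / h * Φ x)) (Set.Ioi xp) := by
      have hbig : IntegrableOn
          (fun x => Real.exp (2*c/h) * Real.exp (-(c/h * (x - xp)))) (Set.Ioi xp) :=
        (aux_exp_tail_integrableOn_Ioi (c/h) xp xp (by positivity)).const_mul _
      refine Integrable.mono' hbig hFm.restrict ?_
      refine (ae_restrict_iff' measurableSet_Ioi).2 (Filter.Eventually.of_forall
        (fun x hx => ?_))
      have hx' : xp < x := hx
      rw [Real.norm_eq_abs, Real.abs_exp, ← Real.exp_add, Real.exp_le_exp]
      have hlin : 2 * Φ x ≤ 2*c + -(c * (x - xp)) := by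
        rcases le_total x (xp + 1) with hcase | hcase
        · have h8 := hΦ0 x
          nlinarith [mul_le_mul_of_nonneg_left (show x - xp ≤ 1 by linarith) hc.le]
        · have h8 := keyR 1 one_pos le_rfl x (by linarith)
          nlinarith
      calc 2 / h * Φ x = (2 * Φ x) / h := by ring
        _ ≤ (2*c + -(c * (x - xp))) / h := by gcongr
        _ = 2*c/h + -(c/h * (x - xp)) := by ring
    have hL : IntegrableOn (fun x => Real.exp (2 / h * Φ x)) (Set.Iic xp) := by
      have hbig : IntegrableOn
          (fun x => Real.exp (2*c/h) * Real.exp (-(c/h * (xp - x)))) (Set.Iic xp) :=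
        (aux_exp_tail_integrableOn_Iic (c/h) xp xp (by positivity)).const_mul _
      refine Integrable.mono' hbig hFm.restrict ?_
      refine (ae_restrict_iff' measurableSet_Iic).2 (Filter.Eventually.of_forall
        (fun x hx => ?_))
      have hx' : x ≤ xp := hx
      rw [Real.norm_eq_abs, Real.abs_exp, ← Real.exp_add, Real.exp_le_exp]
      have hlin : 2 * Φ x ≤ 2*c + -(c * (xp - x)) := by
        rcases le_total (xp - 1) x with hcase | hcase
        · have h8 := hΦ0 x
          nlinarith [mul_le_mul_of_nonneg_left (show xp - x ≤ 1 by linarith) hc.le]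
        · have h8 := keyL 1 one_pos le_rfl x (by linarith)
          nlinarith
      calc 2 / h * Φ x = (2 * Φ x) / h := by ring
        _ ≤ (2*c + -(c * (xp - x))) / h := by gcongr
        _ = 2*c/h + -(c/h * (xp - x)) := by ring
    exact hL.union hR
  constructor
  · -- Memℒp
    intro h hh
    have hmeas : AEStronglyMeasurable
        (fun x : ℝ => Complex.exp (-(Complex.I / (h:ℂ)) * ∫ t in xp..x, g t)) volume := by
      refine Continuous.aestronglyMeasurable ?_
      exact Complex.continuous_exp.comp (continuous_const.mul
        (intervalIntegral.continuous_primitive (fun a b => hg.intervalIntegrable a b) xp))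
    rw [memLp_two_iff_integrable_sq_norm hmeas]
    have heq : (fun x : ℝ => ‖Complex.exp (-(Complex.I / (h:ℂ)) * ∫ t in xp..x, g t)‖^2)
        = fun x => Real.exp (2 / h * Φ x) := funext (fun x => hnorm h hh.1 x)
    rw [heq]
    exact hFint h hh.1
  · -- concentration
    intro δ hδ
    set e : ℝ := min δ 1 with he
    have he0 : 0 < e := lt_min hδ one_pos
    have he1 : e ≤ 1 := min_le_right _ _
    have heδ : e ≤ δ := min_le_left _ _
    refine ⟨c * e^2 / 4, min 1 ((c*e)^2 * Real.exp (-(4*C))), by positivity, by positivity,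
      min_le_left _ _, ?_⟩
    intro h hh
    obtain ⟨hh0, hh₀⟩ := hh
    have hh1 : h ≤ 1 := le_trans hh₀.le (min_le_left _ _)
    simp only [hnorm h hh0]
    have hFi : Integrable (fun x => Real.exp (2 / h * Φ x)) := hFint h hh0
    have hFpos : ∀ x : ℝ, 0 ≤ Real.exp (2 / h * Φ x) := fun x => (Real.exp_pos _).le
    set b : ℝ := c * e / h with hb
    have hbpos : 0 < b := by positivity
    -- right tail
    have hIciInt : IntegrableOn (fun x => Real.exp (-(b * (x - (xp + e/2)))))
        (Set.Ici (xp+e)) := by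
      rw [integrableOn_Ici_iff_integrableOn_Ioi]
      exact aux_exp_tail_integrableOn_Ioi b _ _ hbpos
    have htr : ∫ x in Set.Ici (xp+e), Real.exp (2 / h * Φ x)
        ≤ Real.exp (-(b * (e/2))) / b := by
      have hstep : ∫ x in Set.Ici (xp+e), Real.exp (2 / h * Φ x)
          ≤ ∫ x in Set.Ici (xp+e), Real.exp (-(b * (x - (xp + e/2)))) := by
        refine setIntegral_mono_on hFi.integrableOn hIciInt measurableSet_Ici (fun x hx => ?_)
        have hx' : xp + e ≤ x := hx
        rw [Real.exp_le_exp]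
        have hkey := keyR e he0 he1 x hx'
        calc 2 / h * Φ x ≤ 2 / h * (-(c * e / 2) * (x - (xp + e / 2))) :=
              mul_le_mul_of_nonneg_left hkey (by positivity)
          _ = -(b * (x - (xp + e/2))) := by rw [hb]; field_simp
      have hval : ∫ x in Set.Ici (xp+e), Real.exp (-(b * (x - (xp + e/2))))
          = Real.exp (-(b * (e/2))) / b := by
        rw [integral_Ici_eq_integral_Ioi, aux_exp_tail_integral_Ioi b _ _ hbpos]
        congr 3; ring
      linarith [hstep, hval.le]
    -- left tail
    have hIicInt : IntegrableOn (fun x => Real.exp (-(b * ((xp - e/2) - x))))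
        (Set.Iic (xp - e)) :=
      aux_exp_tail_integrableOn_Iic b _ _ hbpos
    have htl : ∫ x in Set.Iic (xp-e), Real.exp (2 / h * Φ x)
        ≤ Real.exp (-(b * (e/2))) / b := by
      have hstep : ∫ x in Set.Iic (xp-e), Real.exp (2 / h * Φ x)
          ≤ ∫ x in Set.Iic (xp-e), Real.exp (-(b * ((xp - e/2) - x))) := by
        refine setIntegral_mono_on hFi.integrableOn hIicInt measurableSet_Iic (fun x hx => ?_)
        have hx' : x ≤ xp - e := hx
        rw [Real.exp_le_exp]
        have hkey := keyL e he0 he1 x hx'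
        calc 2 / h * Φ x ≤ 2 / h * (-(c * e / 2) * ((xp - e/2) - x)) :=
              mul_le_mul_of_nonneg_left hkey (by positivity)
          _ = -(b * ((xp - e/2) - x)) := by rw [hb]; field_simp
      have hval : ∫ x in Set.Iic (xp-e), Real.exp (-(b * ((xp - e/2) - x)))
          = Real.exp (-(b * (e/2))) / b := by
        rw [aux_exp_tail_integral_Iic b _ _ hbpos]
        congr 3; ring
      linarith [hstep, hval.le]
    -- union bound
    have hsub : {x : ℝ | δ ≤ |x - xp|} ⊆ Set.Iic (xp - e) ∪ Set.Ici (xp + e) := by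
      intro x hx
      simp only [Set.mem_setOf_eq] at hx
      have hx2 : e ≤ |x - xp| := le_trans heδ hx
      rcases le_total x xp with h' | h'
      · left
        rw [abs_of_nonpos (by linarith)] at hx2
        simp only [Set.mem_Iic]; linarith
      · right
        rw [_root_.abs_of_nonneg (by linarith)] at hx2
        simp only [Set.mem_Ici]; linarith
    have htail : ∫ x in {x : ℝ | δ ≤ |x - xp|}, Real.exp (2 / h * Φ x)
        ≤ 2 * (Real.exp (-(b * (e/2))) / b) := by
      have hu : ∫ x in Set.Iic (xp - e) ∪ Set.Ici (xp + e), Real.exp (2 / h * Φ x)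
          = (∫ x in Set.Iic (xp - e), Real.exp (2 / h * Φ x))
            + ∫ x in Set.Ici (xp + e), Real.exp (2 / h * Φ x) :=
        setIntegral_union (Set.Iic_disjoint_Ici.2 (not_le.mpr (by linarith)))
          measurableSet_Ici hFi.integrableOn hFi.integrableOn
      have hmono := setIntegral_mono_set hFi.integrableOn
        (Filter.Eventually.of_forall hFpos) (HasSubset.Subset.eventuallyLE hsub)
      rw [hu] at hmono
      linarith [htl, htr, hmono]
    -- lower bound on the total mass
    set r : ℝ := Real.sqrt h with hr
    have hr0 : 0 < r := Real.sqrt_pos.2 hh0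
    have hr1 : r ≤ 1 := Real.sqrt_le_one.2 hh1
    have hrr : r * r = h := Real.mul_self_sqrt hh0.le
    have hlow : 2 * r * Real.exp (-(2*C)) ≤ ∫ x, Real.exp (2 / h * Φ x) := by
      have h8 : ∫ x in Set.Icc (xp - r) (xp + r), Real.exp (2 / h * Φ x)
          ≤ ∫ x, Real.exp (2 / h * Φ x) :=
        setIntegral_le_integral hFi (Filter.Eventually.of_forall hFpos)
      have h9 : ∫ x in Set.Icc (xp - r) (xp + r), Real.exp (-(2*C))
          ≤ ∫ x in Set.Icc (xp - r) (xp + r), Real.exp (2 / h * Φ x) := by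
        refine setIntegral_mono_on (integrableOn_const (by rw [Real.volume_Icc]; exact ENNReal.ofReal_ne_top))
          hFi.integrableOn measurableSet_Icc (fun x hx => ?_)
        rw [Real.exp_le_exp]
        have h10 := keyD r hr0 hr1 x (abs_le.2 ⟨by linarith [hx.1], by linarith [hx.2]⟩)
        have h11 : 2 / h * (-(C * r * r)) = -(2*C) := by
          have h11a : C * r * r = C * h := by rw [mul_assoc, hrr]
          rw [h11a]
          field_simp
        calc -(2*C) = 2 / h * (-(C * r * r)) := h11.symm
          _ ≤ 2 / h * Φ x := mul_le_mul_of_nonneg_left h10 (by positivity)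
      have h12 : ∫ x in Set.Icc (xp - r) (xp + r), Real.exp (-(2*C))
          = 2 * r * Real.exp (-(2*C)) := by
        rw [setIntegral_const, measureReal_def, Real.volume_Icc,
          show xp + r - (xp - r) = 2*r by ring, ENNReal.toReal_ofReal (by positivity),
          smul_eq_mul]
      linarith [h8, h9, h12.le]
    -- final arithmetic
    set E : ℝ := Real.exp (-(c * e^2 / 4) / h) with hE
    have hEpos : 0 < E := Real.exp_pos _
    have hE1 : E ≤ 1 := Real.exp_le_one_iff.2 (by
      have : 0 ≤ (c * e^2 / 4) / h := by positivity
      linarith [neg_div (h) (c * e^2/4)])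
    have hEE : Real.exp (-(b * (e/2))) = E * E := by
      rw [hE, ← Real.exp_add]
      congr 1
      rw [hb]
      field_simp
      ring
    have hfrac : Real.exp (-(b * (e/2))) / b = (E * E) * (h / (c*e)) := by
      rw [hEE, hb]
      field_simp
    have h13 : r ≤ (c*e) * Real.exp (-(2*C)) := by
      have h14 : (c*e)^2 * Real.exp (-(4*C)) = ((c*e) * Real.exp (-(2*C)))^2 := by
        rw [show ((c*e) * Real.exp (-(2*C)))^2
            = (c*e)^2 * (Real.exp (-(2*C)) * Real.exp (-(2*C))) by ring, ← Real.exp_add]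
        ring_nf
      have h15 : h ≤ ((c*e) * Real.exp (-(2*C)))^2 := by
        rw [← h14]
        exact le_trans hh₀.le (min_le_right _ _)
      calc r = Real.sqrt h := hr
        _ ≤ Real.sqrt (((c*e) * Real.exp (-(2*C)))^2) := Real.sqrt_le_sqrt h15
        _ = (c*e) * Real.exp (-(2*C)) := Real.sqrt_sq (by positivity)
    have hfinal : E * (h / (c*e)) ≤ r * Real.exp (-(2*C)) := by
      have h16 : h / (c*e) ≤ r * Real.exp (-(2*C)) := by
        rw [div_le_iff₀ (by positivity : (0:ℝ) < c*e)]
        have := mul_le_mul_of_nonneg_left h13 hr0.le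
        calc h = r * r := hrr.symm
          _ ≤ r * ((c*e) * Real.exp (-(2*C))) := this
          _ = r * Real.exp (-(2*C)) * (c*e) := by ring
      calc E * (h / (c*e)) ≤ 1 * (h / (c*e)) :=
            mul_le_mul_of_nonneg_right hE1 (by positivity)
        _ = h / (c*e) := one_mul _
        _ ≤ r * Real.exp (-(2*C)) := h16
    have hgoalE : Real.exp (-(c * e^2 / 4) / h) = E := rfl
    calc ∫ x in {x : ℝ | δ ≤ |x - xp|}, Real.exp (2 / h * Φ x)
        ≤ 2 * (Real.exp (-(b * (e/2))) / b) := htail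
      _ = 2 * ((E * E) * (h / (c*e))) := by rw [hfrac]
      _ = 2 * E * (E * (h / (c*e))) := by ring
      _ ≤ 2 * E * (r * Real.exp (-(2*C))) :=
          mul_le_mul_of_nonneg_left hfinal (by positivity)
      _ = E * (2 * r * Real.exp (-(2*C))) := by ring
      _ ≤ E * ∫ x, Real.exp (2 / h * Φ x) := mul_le_mul_of_nonneg_left hlow hEpos.le
      _ = Real.exp (-(c * e^2 / 4) / h) * ∫ x, Real.exp (2 / h * Φ x) := by rw [hgoalE]
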